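/- Consider the system with (p₁,p₂,p₃) = (-1,-1,2) and (ξ₁,ξ₂,ξ₃) = (1/2,0,0). For every η ∈ ℚ, with k₀⁺(η) = #{j : {ξ_j - p_j η} = 0, p_j > 0} and k₀⁻(η) = #{j : {ξ_j - p_j η} = 0, p_j < 0}, one has k₀⁺(η) = k₀⁻(η); i.e., |k₀⁺(η) - k₀⁻(η)| = 0 for all rational η. -/

import Mathlib

lemma fract_zero_iff (a : ℚ) : Int.fract a = 0 ↔ ∃ z : ℤ, a = z := by
  rw [Int.fract_eq_iff]
  simp

theorem counterexample_difference_number_zero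
    (p : Fin 3 → ℤ) (hp : p = ![-1, -1, 2])
    (ξ : Fin 3 → ℚ) (hξ : ξ = ![1 / 2, 0, 0]) :
    ∀ η : ℚ,
      ((Finset.univ.filter fun j => Int.fract (ξ j - (p j : ℚ) * η) = 0 ∧ 0 < p j).card : ℤ)
        = ((Finset.univ.filter fun j => Int.fract (ξ j - (p j : ℚ) * η) = 0 ∧ p j < 0).card : ℤ) := by
  subst hp hξ
  intro η
  rw [Finset.card_filter, Finset.card_filter, Fin.sum_univ_three, Fin.sum_univ_three]
  norm_num [Matrix.cons_val_two]
  by_cases hA : Int.fract (1 / 2 + η) = 0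
  · by_cases hB : Int.fract η = 0
    · exfalso
      obtain ⟨a, ha⟩ := (fract_zero_iff _).1 hA
      obtain ⟨b, hb⟩ := (fract_zero_iff _).1 hB
      have h2 : (2 * a : ℚ) = 2 * b + 1 := by rw [hb] at ha; linarith
      have h3 : (2 * a : ℤ) = 2 * b + 1 := by exact_mod_cast h2
      omega
    · obtain ⟨a, ha⟩ := (fract_zero_iff _).1 hA
      have hC : Int.fract (2 * η) = 0 := (fract_zero_iff _).2 ⟨2 * a - 1, by push_cast; linarith⟩
      rw [if_pos hC, if_pos hA, if_neg hB]
      norm_num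
  · by_cases hB : Int.fract η = 0
    · obtain ⟨b, hb⟩ := (fract_zero_iff _).1 hB
      have hC : Int.fract (2 * η) = 0 := (fract_zero_iff _).2 ⟨2 * b, by push_cast; linarith⟩
      rw [if_pos hC, if_neg hA, if_pos hB]
      norm_num
    · have hC : Int.fract (2 * η) ≠ 0 := by
        intro h
        obtain ⟨z, hz⟩ := (fract_zero_iff _).1 h
        rcases Int.even_or_odd z with ⟨m, hm⟩ | ⟨m, hm⟩
        · exact hB ((fract_zero_iff _).2 ⟨m, by subst hm; push_cast at hz ⊢; linarith⟩)
        · exact hA ((fract_zero_iff _).2 ⟨m + 1, by subst hm; push_cast at hz ⊢; linarith⟩)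
      rw [if_neg hC, if_neg hA, if_neg hB]
      norm_num
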